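/- Decomposition of the updated transitive closure: with Arc' = Arc ∪ {(d,b)}, TC = TransGen Arc, TC' = TransGen Arc', and Δ the least relation satisfying Δ(d,b), Δ(d,y) ← TC(b,y), and Δ(x,y) ← Arc(x,z) ∧ Δ(z,y), every pair related by TC' is related by TC or related by a composite path of the form: a (possibly empty) TC-prefix followed by a Δ-witnessed suffix. Formally: TC'(x,y) → TC(x,y) ∨ Δ(x,y) ∨ ∃z, TC(x,z) ∧ Δ(z,y). -/

import Mathlib

/-- The delta relation for the insertion of the single edge `(d, b)` into `Arc`. -/
inductive Delta {U : Type*} (Arc : U → U → Prop) (d b : U) : U → U → Prop where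
  | base : Delta Arc d b d b
  | tc {y : U} : Relation.TransGen Arc b y → Delta Arc d b d y
  | step {x z y : U} : Arc x z → Delta Arc d b z y → Delta Arc d b x y

/-- Decomposition of the updated transitive closure: every pair related by
`TC' = TransGen (Arc ∪ {(d,b)})` is related by `TC = TransGen Arc`, or by `Δ`,
or by a `TC`-prefix followed by a `Δ`-suffix. -/
theorem transGen_insert_decomposition {U : Type*} (d b : U) (Arc : U → U → Prop) :
    ∀ x y, Relation.TransGen (fun x y => Arc x y ∨ (x = d ∧ y = b)) x y →
      Relation.TransGen Arc x y ∨ Delta Arc d b x y ∨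
        ∃ z, Relation.TransGen Arc x z ∧ Delta Arc d b z y := by
  have key : ∀ z y, Delta Arc d b z y → Delta Arc d b d y := by
    intro z y h
    induction h with
    | base => exact Delta.base
    | tc h => exact Delta.tc h
    | step _ _ ih => exact ih
  intro x y h
  induction h using Relation.TransGen.head_induction_on with
  | single h =>
    rcases h with h | ⟨rfl, rfl⟩
    · exact Or.inl (Relation.TransGen.single h)
    · exact Or.inr (Or.inl Delta.base)
  | head h _ ih =>
    rcases h with h | ⟨rfl, rfl⟩
    · rcases ih with ih | ih | ⟨z, hz, hd⟩
      · exact Or.inl (Relation.TransGen.head h ih)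
      · exact Or.inr (Or.inl (Delta.step h ih))
      · exact Or.inr (Or.inr ⟨z, Relation.TransGen.head h hz, hd⟩)
    · rcases ih with ih | ih | ⟨z, _, hd⟩
      · exact Or.inr (Or.inl (Delta.tc ih))
      · exact Or.inr (Or.inl (key _ _ ih))
      · exact Or.inr (Or.inl (key _ _ hd))
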